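/- Let W be symmetric positive definite, θ ∈ (0,1], and M symmetric positive definite. Suppose X̄ is a symmetric positive definite matrix with X̄ = g_{θ,W}(X̄) and suppose that for every symmetric positive semidefinite X the iterates g_{θ,W}^k(X) converge to X̄ as k → ∞. Then X̄ ≤ M if and only if there exists a symmetric matrix X with 0 < X ≤ M and g_{θ,W}(X) ≤ X. (Fixed-point feasibility equivalence, first step of the proof of Theorem 2 in Appendix D.) -/

import Mathlib

open Matrix Filter

/-- The modified Riccati operator
`g_{θ,W}(X) = A X Aᵀ + Q − θ A X Cᵀ (C X Cᵀ + W)⁻¹ C X Aᵀ`. -/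
noncomputable def gRic {n m : ℕ} (A Q : Matrix (Fin n) (Fin n) ℝ)
    (C : Matrix (Fin m) (Fin n) ℝ) (W : Matrix (Fin m) (Fin m) ℝ) (θ : ℝ)
    (X : Matrix (Fin n) (Fin n) ℝ) : Matrix (Fin n) (Fin n) ℝ :=
  A * X * Aᵀ + Q - θ • (A * X * Cᵀ * (C * X * Cᵀ + W)⁻¹ * (C * X * Aᵀ))

section Aux

variable {n m : ℕ}

/-- `B * P * Bᵀ` is PSD over ℝ. -/
lemma psd_conj {p q : ℕ} {P : Matrix (Fin q) (Fin q) ℝ} (hP : P.PosSemidef)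
    (B : Matrix (Fin p) (Fin q) ℝ) : (B * P * Bᵀ).PosSemidef := by
  simpa [Matrix.conjTranspose_eq_transpose_of_trivial] using hP.mul_mul_conjTranspose_same B

lemma psd_smul {a : ℝ} (ha : 0 ≤ a) {P : Matrix (Fin n) (Fin n) ℝ}
    (hP : P.PosSemidef) : (a • P).PosSemidef := by
  refine Matrix.PosSemidef.of_dotProduct_mulVec_nonneg ?_ fun x => ?_
  · simpa [Matrix.IsHermitian, Matrix.conjTranspose_smul] using
      congrArg (a • ·) hP.1
  · rw [Matrix.smul_mulVec, dotProduct_smul, smul_eq_mul]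
    exact mul_nonneg ha (hP.dotProduct_mulVec_nonneg x)

/-- Completion of squares identity. -/
lemma key_expand (A Z : Matrix (Fin n) (Fin n) ℝ) (C : Matrix (Fin m) (Fin n) ℝ)
    (s j : Matrix (Fin m) (Fin m) ℝ) (K : Matrix (Fin n) (Fin m) ℝ)
    (h1 : s * j = 1) (h2 : j * s = 1) (hj : jᵀ = j) (hZ : Zᵀ = Z) :
    (K - A * Z * Cᵀ * j) * s * (K - A * Z * Cᵀ * j)ᵀ
      = K * s * Kᵀ - K * (C * Z * Aᵀ) - A * Z * Cᵀ * Kᵀ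
        + A * Z * Cᵀ * j * (C * Z * Aᵀ) := by
  have e0 : (K - A * Z * Cᵀ * j)ᵀ = Kᵀ - j * (C * Z * Aᵀ) := by
    rw [Matrix.transpose_sub]
    congr 1
    simp [Matrix.transpose_mul, hj, hZ, Matrix.mul_assoc]
  have hjs : ∀ x : Matrix (Fin m) (Fin n) ℝ, j * (s * x) = x := fun x => by
    rw [← Matrix.mul_assoc, h2, Matrix.one_mul]
  have hsj : ∀ x : Matrix (Fin m) (Fin n) ℝ, s * (j * x) = x := fun x => by
    rw [← Matrix.mul_assoc, h1, Matrix.one_mul]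
  rw [e0]
  simp only [Matrix.mul_sub, Matrix.sub_mul, Matrix.mul_assoc, hjs, hsj]
  abel

/-- The difference of the "gain form" at the same `K` for two different `Z`. -/
lemma gK_diff (A Q : Matrix (Fin n) (Fin n) ℝ) (C : Matrix (Fin m) (Fin n) ℝ)
    (W : Matrix (Fin m) (Fin m) ℝ) (K : Matrix (Fin n) (Fin m) ℝ)
    (X Y : Matrix (Fin n) (Fin n) ℝ) :
    (A * Y * Aᵀ + Q - K * (C * Y * Aᵀ) - A * Y * Cᵀ * Kᵀ + K * (C * Y * Cᵀ + W) * Kᵀ)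
      - (A * X * Aᵀ + Q - K * (C * X * Aᵀ) - A * X * Cᵀ * Kᵀ + K * (C * X * Cᵀ + W) * Kᵀ)
      = (A - K * C) * (Y - X) * (A - K * C)ᵀ := by
  simp only [Matrix.transpose_sub, Matrix.transpose_mul, Matrix.mul_add, Matrix.add_mul,
    Matrix.mul_sub, Matrix.sub_mul, Matrix.mul_assoc]
  abel

/-- The gain form as an explicitly PSD expression. -/
lemma gK_eq (A Q : Matrix (Fin n) (Fin n) ℝ) (C : Matrix (Fin m) (Fin n) ℝ)
    (W : Matrix (Fin m) (Fin m) ℝ) (K : Matrix (Fin n) (Fin m) ℝ)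
    (Z : Matrix (Fin n) (Fin n) ℝ) :
    A * Z * Aᵀ + Q - K * (C * Z * Aᵀ) - A * Z * Cᵀ * Kᵀ + K * (C * Z * Cᵀ + W) * Kᵀ
      = (A - K * C) * Z * (A - K * C)ᵀ + K * W * Kᵀ + Q := by
  simp only [Matrix.transpose_sub, Matrix.transpose_mul, Matrix.mul_add, Matrix.add_mul,
    Matrix.mul_sub, Matrix.sub_mul, Matrix.mul_assoc]
  abel

end Aux

section Main

variable {n m : ℕ} (A Q : Matrix (Fin n) (Fin n) ℝ) (C : Matrix (Fin m) (Fin n) ℝ)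
  (W : Matrix (Fin m) (Fin m) ℝ) (θ : ℝ)

/-- abbreviation for the innovation covariance -/
noncomputable def sMat (Z : Matrix (Fin n) (Fin n) ℝ) : Matrix (Fin m) (Fin m) ℝ :=
  C * Z * Cᵀ + W

/-- abbreviation for the Kalman gain -/
noncomputable def kMat (Z : Matrix (Fin n) (Fin n) ℝ) : Matrix (Fin n) (Fin m) ℝ :=
  A * Z * Cᵀ * (sMat C W Z)⁻¹

/-- the (θ = 1) Riccati map -/
noncomputable def ric (Z : Matrix (Fin n) (Fin n) ℝ) : Matrix (Fin n) (Fin n) ℝ :=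
  A * Z * Aᵀ + Q - A * Z * Cᵀ * (sMat C W Z)⁻¹ * (C * Z * Aᵀ)

variable {A Q C W θ}

lemma sMat_posDef (hW : W.PosDef) {Z : Matrix (Fin n) (Fin n) ℝ} (hZ : Z.PosSemidef) :
    (sMat C W Z).PosDef :=
  Matrix.PosDef.posSemidef_add (psd_conj hZ C) hW

lemma sMat_transpose (hW : W.PosDef) {Z : Matrix (Fin n) (Fin n) ℝ} (hZ : Z.PosSemidef) :
    (sMat C W Z)ᵀ = sMat C W Z := by
  have hZt : Zᵀ = Z := by
    simpa [Matrix.conjTranspose_eq_transpose_of_trivial] using hZ.1.eq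
  have hWt : Wᵀ = W := by
    simpa [Matrix.conjTranspose_eq_transpose_of_trivial] using hW.isHermitian.eq
  simp [sMat, Matrix.transpose_add, Matrix.transpose_mul, hZt, hWt, Matrix.mul_assoc]

lemma sMat_mul_inv (hW : W.PosDef) {Z : Matrix (Fin n) (Fin n) ℝ} (hZ : Z.PosSemidef) :
    sMat C W Z * (sMat C W Z)⁻¹ = 1 :=
  Matrix.mul_nonsing_inv _ ((Matrix.isUnit_iff_isUnit_det _).1 (sMat_posDef hW hZ).isUnit)

lemma sMat_inv_mul (hW : W.PosDef) {Z : Matrix (Fin n) (Fin n) ℝ} (hZ : Z.PosSemidef) :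
    (sMat C W Z)⁻¹ * sMat C W Z = 1 :=
  Matrix.nonsing_inv_mul _ ((Matrix.isUnit_iff_isUnit_det _).1 (sMat_posDef hW hZ).isUnit)

lemma sMat_inv_transpose (hW : W.PosDef) {Z : Matrix (Fin n) (Fin n) ℝ} (hZ : Z.PosSemidef) :
    ((sMat C W Z)⁻¹)ᵀ = (sMat C W Z)⁻¹ := by
  rw [Matrix.transpose_nonsing_inv, sMat_transpose hW hZ]

/-- `gK K Z - ric Z = (K - kMat Z) sMat Z (K - kMat Z)ᵀ`. -/
lemma gK_sub_ric (hW : W.PosDef) (K : Matrix (Fin n) (Fin m) ℝ)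
    {Z : Matrix (Fin n) (Fin n) ℝ} (hZ : Z.PosSemidef) :
    (A * Z * Aᵀ + Q - K * (C * Z * Aᵀ) - A * Z * Cᵀ * Kᵀ + K * (sMat C W Z) * Kᵀ)
      - ric A Q C W Z
      = (K - kMat A C W Z) * sMat C W Z * (K - kMat A C W Z)ᵀ := by
  have hZt : Zᵀ = Z := by
    simpa [Matrix.conjTranspose_eq_transpose_of_trivial] using hZ.1.eq
  rw [kMat, key_expand A Z C (sMat C W Z) ((sMat C W Z)⁻¹) K
    (sMat_mul_inv hW hZ) (sMat_inv_mul hW hZ) (sMat_inv_transpose hW hZ) hZt, ric]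
  simp only [Matrix.mul_assoc]
  abel

/-- `ric Z` equals the gain form at `K = kMat Z`. -/
lemma ric_eq_gK (hW : W.PosDef) {Z : Matrix (Fin n) (Fin n) ℝ} (hZ : Z.PosSemidef) :
    ric A Q C W Z
      = (A - kMat A C W Z * C) * Z * (A - kMat A C W Z * C)ᵀ
        + kMat A C W Z * W * (kMat A C W Z)ᵀ + Q := by
  have h := gK_sub_ric (A := A) (Q := Q) (C := C) hW (kMat A C W Z) hZ
  simp only [sub_self, Matrix.zero_mul, Matrix.transpose_zero, Matrix.mul_zero] at h
  rw [sub_eq_zero] at h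
  rw [← h, sMat, gK_eq]

/-- `ric Z` is PSD for PSD `Z`. -/
lemma ric_posSemidef (hQ : Q.PosSemidef) (hW : W.PosDef)
    {Z : Matrix (Fin n) (Fin n) ℝ} (hZ : Z.PosSemidef) :
    (ric A Q C W Z).PosSemidef := by
  rw [ric_eq_gK hW hZ]
  exact ((psd_conj hZ _).add (psd_conj hW.posSemidef _)).add hQ

/-- Monotonicity-type decomposition:
`ric Y - ric X` is a sum of two PSD conjugations. -/
lemma ric_mono (hW : W.PosDef) {X Y : Matrix (Fin n) (Fin n) ℝ}
    (hX : X.PosSemidef) (hY : Y.PosSemidef) (hXY : (Y - X).PosSemidef) :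
    (ric A Q C W Y - ric A Q C W X).PosSemidef := by
  set KY := kMat A C W Y with hKY
  set KX := kMat A C W X with hKX
  have hE1 : A * Y * Aᵀ + Q - KY * (C * Y * Aᵀ) - A * Y * Cᵀ * KYᵀ
      + KY * (sMat C W Y) * KYᵀ = ric A Q C W Y := by
    have h := gK_sub_ric (A := A) (Q := Q) (C := C) hW KY hY
    rw [hKY] at h ⊢
    simp only [sub_self, Matrix.zero_mul, Matrix.transpose_zero, Matrix.mul_zero] at h
    rwa [sub_eq_zero] at h
  have hE2 := gK_sub_ric (A := A) (Q := Q) (C := C) hW KY hX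
  have hE3 := gK_diff A Q C W KY X Y
  have hdecomp : ric A Q C W Y - ric A Q C W X
      = (A - KY * C) * (Y - X) * (A - KY * C)ᵀ
        + (KY - KX) * sMat C W X * (KY - KX)ᵀ := by
    rw [← hE3, ← hE2, ← hE1]
    simp only [sMat]
    abel
  rw [hdecomp]
  exact (psd_conj hXY _).add (psd_conj (sMat_posDef hW hX).posSemidef _)

lemma gRic_decomp (Z : Matrix (Fin n) (Fin n) ℝ) :
    gRic A Q C W θ Z = (1 - θ) • (A * Z * Aᵀ + Q) + θ • ric A Q C W Z := by
  simp only [gRic, ric, sMat]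
  module

/-- `gRic` preserves PSD. -/
lemma gRic_posSemidef (hQ : Q.PosSemidef) (hW : W.PosDef) (hθ : θ ∈ Set.Ioc (0 : ℝ) 1)
    {Z : Matrix (Fin n) (Fin n) ℝ} (hZ : Z.PosSemidef) :
    (gRic A Q C W θ Z).PosSemidef := by
  rw [gRic_decomp]
  exact (psd_smul (by linarith [hθ.2] : (0:ℝ) ≤ 1 - θ)
      ((psd_conj hZ A).add hQ)).add
    (psd_smul (le_of_lt hθ.1) (ric_posSemidef hQ hW hZ))

/-- `gRic` is monotone on PSD matrices. -/
lemma gRic_mono (hW : W.PosDef) (hθ : θ ∈ Set.Ioc (0 : ℝ) 1)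
    {X Y : Matrix (Fin n) (Fin n) ℝ}
    (hX : X.PosSemidef) (hY : Y.PosSemidef) (hXY : (Y - X).PosSemidef) :
    (gRic A Q C W θ Y - gRic A Q C W θ X).PosSemidef := by
  have h : gRic A Q C W θ Y - gRic A Q C W θ X
      = (1 - θ) • (A * (Y - X) * Aᵀ) + θ • (ric A Q C W Y - ric A Q C W X) := by
    rw [gRic_decomp (θ := θ) X, gRic_decomp (θ := θ) Y]
    have : A * (Y - X) * Aᵀ = A * Y * Aᵀ - A * X * Aᵀ := by
      rw [Matrix.mul_sub, Matrix.sub_mul]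
    rw [this]
    module
  rw [h]
  exact (psd_smul (by linarith [hθ.2] : (0:ℝ) ≤ 1 - θ) (psd_conj hXY A)).add
    (psd_smul (le_of_lt hθ.1) (ric_mono hW hX hY hXY))

end Main

/-- Fixed-point feasibility equivalence (first step of the proof of Theorem 2,
Appendix D): `X̄ ≤ M` iff there exists `0 < X ≤ M` with `g_{θ,W}(X) ≤ X`. -/
theorem fixed_point_feasibility {n m : ℕ}
    (A Q : Matrix (Fin n) (Fin n) ℝ) (C : Matrix (Fin m) (Fin n) ℝ)
    (W : Matrix (Fin m) (Fin m) ℝ) (θ : ℝ)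
    (hQ : Q.PosSemidef) (hW : W.PosDef) (hθ : θ ∈ Set.Ioc (0 : ℝ) 1)
    (M : Matrix (Fin n) (Fin n) ℝ) (hM : M.PosDef)
    (Xb : Matrix (Fin n) (Fin n) ℝ) (hXb : Xb.PosDef)
    (hfix : Xb = gRic A Q C W θ Xb)
    (hconv : ∀ X : Matrix (Fin n) (Fin n) ℝ, X.PosSemidef →
      Tendsto (fun k => (gRic A Q C W θ)^[k] X) atTop (nhds Xb)) :
    (M - Xb).PosSemidef ↔
      ∃ X : Matrix (Fin n) (Fin n) ℝ, X.PosDef ∧ (M - X).PosSemidef ∧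
        (X - gRic A Q C W θ X).PosSemidef := by
  constructor
  · intro h
    exact ⟨Xb, hXb, h, by rw [← hfix, sub_self]; exact Matrix.PosSemidef.zero⟩
  · rintro ⟨X, hXpd, hMX, hfeas⟩
    -- every iterate is PSD and dominated by X
    have hiter : ∀ k, ((gRic A Q C W θ)^[k] X).PosSemidef ∧
        (X - (gRic A Q C W θ)^[k] X).PosSemidef := by
      intro k
      induction k with
      | zero =>
        refine ⟨hXpd.posSemidef, ?_⟩
        rw [Function.iterate_zero_apply, sub_self]
        exact Matrix.PosSemidef.zero
      | succ k ih =>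
        rw [Function.iterate_succ_apply']
        refine ⟨gRic_posSemidef hQ hW hθ ih.1, ?_⟩
        have h1 : (gRic A Q C W θ X - gRic A Q C W θ ((gRic A Q C W θ)^[k] X)).PosSemidef :=
          gRic_mono (C := C) hW hθ ih.1 hXpd.posSemidef ih.2
        have : X - gRic A Q C W θ ((gRic A Q C W θ)^[k] X)
            = (X - gRic A Q C W θ X)
              + (gRic A Q C W θ X - gRic A Q C W θ ((gRic A Q C W θ)^[k] X)) := by abel
        rw [this]
        exact hfeas.add h1
    -- pass to the limit: X - Xb is PSD
    have hlim := hconv X hXpd.posSemidef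
    have hXXb : (X - Xb).PosSemidef := by
      refine Matrix.PosSemidef.of_dotProduct_mulVec_nonneg ?_ ?_
      · exact hXpd.posSemidef.1.sub hXb.isHermitian
      · intro v
        have hcont : Continuous fun Y : Matrix (Fin n) (Fin n) ℝ =>
            star v ⬝ᵥ ((X - Y) *ᵥ v) :=
          continuous_const.dotProduct
            ((continuous_const.sub continuous_id).matrix_mulVec continuous_const)
        have htend : Tendsto (fun k => star v ⬝ᵥ ((X - (gRic A Q C W θ)^[k] X) *ᵥ v))
            atTop (nhds (star v ⬝ᵥ ((X - Xb) *ᵥ v))) :=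
          (hcont.tendsto Xb).comp hlim
        exact ge_of_tendsto' htend fun k => (hiter k).2.dotProduct_mulVec_nonneg v
    have : M - Xb = (M - X) + (X - Xb) := by abel
    rw [this]
    exact hMX.add hXXb
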